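/- Let d ≥ 1, let 𝓜 denote the Borel measures on ℝ^d, let S ⊆ ℝ^d be a Borel set, let Λ ≥ 0, and let f : 𝓜 → ℝ satisfy (i) |f(μ)| ≤ Λ for every μ ∈ 𝓜, and (ii) the locality property f(μ) = f(μ⌞S) for every μ ∈ 𝓜, where μ⌞S denotes the restriction of the measure μ to S. Then for every nonempty finite index set E, every family of points (x_i)_{i∈E} in ℝ^d and every μ ∈ 𝓜: |(D_E f)(μ)| ≤ 2^{|E|} Λ ∏_{i∈E} 1_{S}(x_i); in particular, if x_i ∉ S for some i ∈ E then D_E f vanishes identically. -/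

import Mathlib

open MeasureTheory

/-- The iterated difference operator
`(D_F f)(μ) = ∑_{G ⊆ F} (−1)^{|F∖G|} f(μ + ∑_{i∈G} δ_{x_i})`. -/
noncomputable def iterDiff {d : ℕ} {ι : Type*} [DecidableEq ι]
    (x : ι → Fin d → ℝ) (F : Finset ι)
    (f : Measure (Fin d → ℝ) → ℝ) (μ : Measure (Fin d → ℝ)) : ℝ :=
  ∑ G ∈ F.powerset,
    (-1 : ℝ) ^ ((F \ G).card) * f (μ + ∑ i ∈ G, Measure.dirac (x i))

lemma f_add_dirac_of_not_mem {d : ℕ} (S : Set (Fin d → ℝ)) (hS : MeasurableSet S)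
    (f : Measure (Fin d → ℝ) → ℝ) (hloc : ∀ μ, f μ = f (μ.restrict S))
    {a : Fin d → ℝ} (ha : a ∉ S) (ν : Measure (Fin d → ℝ)) :
    f (ν + Measure.dirac a) = f ν := by
  classical
  rw [hloc (ν + Measure.dirac a), hloc ν]
  congr 1
  rw [Measure.restrict_add, MeasureTheory.restrict_dirac' hS, if_neg ha, add_zero]

lemma iterDiff_vanish {d : ℕ} {ι : Type*} [DecidableEq ι]
    (S : Set (Fin d → ℝ)) (hS : MeasurableSet S)
    (f : Measure (Fin d → ℝ) → ℝ) (hloc : ∀ μ, f μ = f (μ.restrict S))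
    (E : Finset ι) (x : ι → Fin d → ℝ)
    {i : ι} (hiE : i ∈ E) (hxi : x i ∉ S) (μ : Measure (Fin d → ℝ)) :
    iterDiff x E f μ = 0 := by
  classical
  obtain ⟨s, hi, rfl⟩ : ∃ s, i ∉ s ∧ insert i s = E :=
    ⟨E.erase i, E.notMem_erase i, Finset.insert_erase hiE⟩
  unfold iterDiff
  rw [Finset.sum_powerset_insert hi, ← Finset.sum_add_distrib]
  apply Finset.sum_eq_zero
  intro t ht
  have hts : t ⊆ s := Finset.mem_powerset.mp ht
  have hit : i ∉ t := fun h => hi (hts h)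
  have hcard1 : (insert i s \ t).card = (s \ t).card + 1 := by
    rw [Finset.insert_sdiff_of_notMem _ hit,
      Finset.card_insert_of_notMem (fun h => hi (Finset.mem_sdiff.mp h).1)]
  have hset : insert i s \ insert i t = s \ t := by
    ext a
    simp only [Finset.mem_sdiff, Finset.mem_insert, not_or]
    constructor
    · rintro ⟨ha | ha, h1, h2⟩
      · exact absurd ha h1
      · exact ⟨ha, h2⟩
    · rintro ⟨ha, h2⟩
      exact ⟨Or.inr ha, fun h => hi (h ▸ ha), h2⟩
  have hsum : ∑ j ∈ insert i t, Measure.dirac (x j)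
      = Measure.dirac (x i) + ∑ j ∈ t, Measure.dirac (x j) :=
    Finset.sum_insert hit
  have hval : f (μ + ∑ j ∈ insert i t, Measure.dirac (x j))
      = f (μ + ∑ j ∈ t, Measure.dirac (x j)) := by
    rw [hsum, add_comm (Measure.dirac (x i)), ← add_assoc]
    exact f_add_dirac_of_not_mem S hS f hloc hxi _
  rw [hval, hcard1, hset, pow_succ]
  ring

/-- if `f` is bounded by `Λ` and local (i.e. `f(μ) = f(μ⌞S)`), then for any
nonempty finite index set `E`, `|D_E f(μ)| ≤ 2^{|E|} Λ ∏_{i∈E} 1_S(x_i)`; in particular,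
`D_E f` vanishes identically as soon as some `x_i` lies outside `S`. -/
theorem iterated_difference_locality_bound
    {d : ℕ} (hd : 1 ≤ d) {ι : Type*} [DecidableEq ι]
    (S : Set (Fin d → ℝ)) (hS : MeasurableSet S)
    (Λ : ℝ) (hΛ : 0 ≤ Λ)
    (f : Measure (Fin d → ℝ) → ℝ)
    (hbd : ∀ μ, |f μ| ≤ Λ)
    (hloc : ∀ μ, f μ = f (μ.restrict S))
    (E : Finset ι) (hE : E.Nonempty) (x : ι → Fin d → ℝ) :
    (∀ μ, |iterDiff x E f μ| ≤
        (2 : ℝ) ^ E.card * Λ * ∏ i ∈ E, S.indicator (fun _ => (1 : ℝ)) (x i)) ∧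
    (∀ i ∈ E, x i ∉ S → ∀ μ, iterDiff x E f μ = 0) := by
  classical
  constructor
  · intro μ
    by_cases h : ∀ i ∈ E, x i ∈ S
    · have hprod : ∏ i ∈ E, S.indicator (fun _ => (1 : ℝ)) (x i) = 1 :=
        Finset.prod_eq_one fun i hi => Set.indicator_of_mem (h i hi) _
      rw [hprod, mul_one]
      calc |iterDiff x E f μ|
          ≤ ∑ G ∈ E.powerset,
            |(-1 : ℝ) ^ ((E \ G).card) * f (μ + ∑ i ∈ G, Measure.dirac (x i))| :=
            Finset.abs_sum_le_sum_abs _ _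
        _ ≤ ∑ G ∈ E.powerset, Λ := by
            apply Finset.sum_le_sum
            intro G _
            rw [abs_mul, abs_pow, abs_neg, abs_one, one_pow, one_mul]
            exact hbd _
        _ = (2 : ℝ) ^ E.card * Λ := by
            rw [Finset.sum_const, Finset.card_powerset, nsmul_eq_mul]
            push_cast
            ring
    · push_neg at h
      obtain ⟨i, hiE, hxi⟩ := h
      rw [iterDiff_vanish S hS f hloc E x hiE hxi μ, abs_zero]
      apply mul_nonneg (mul_nonneg (by positivity) hΛ)
      exact Finset.prod_nonneg fun i _ => Set.indicator_nonneg (fun _ _ => zero_le_one) _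
  · intro i hiE hxi μ
    exact iterDiff_vanish S hS f hloc E x hiE hxi μ
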